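/- arXiv:math/9907010 — 4 statements merged into one kernel-verified Lean document; each statement's English description precedes it below -/
import Mathlib

section
/- Let A be a k×n matrix over R of rank k, and let g ∈ R be a greatest common divisor of the k×k minors of A (i.e., g divides each k×k minor and every common divisor of the k×k minors divides g). If P is a principal associated prime of M_A = R^k/AR^n, then P = ⟨π⟩ for some irreducible element π ∈ R that divides g. -/
noncomputable section

/-- The ring `R = ℤ[u₁^{±1},…,u_d^{±1}]`, realized as the group algebra of `ℤ^d` over `ℤ`. -/
abbrev LaurentR (d : ℕ) : Type := AddMonoidAlgebra ℤ (Fin d → ℤ)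

/-- The submodule `A·Rⁿ ⊆ R^k` generated by the columns of the `k × n` matrix `A`. -/
def colSpan {d k n : ℕ} (A : Matrix (Fin k) (Fin n) (LaurentR d)) :
    Submodule (LaurentR d) (Fin k → LaurentR d) :=
  Submodule.span (LaurentR d) (Set.range fun j i => A i j)

/-- The module `M_A = R^k / A·Rⁿ`. -/
abbrev MA {d k n : ℕ} (A : Matrix (Fin k) (Fin n) (LaurentR d)) : Type :=
  (Fin k → LaurentR d) ⧸ colSpan A

open Matrix

open Submodule in

theorem aux_exists_minor_ne_zero {K : Type*} [Field K] {k n : ℕ} (M : Matrix (Fin k) (Fin n) K)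
    (h : M.rank = k) : ∃ c : Fin k ↪ Fin n, (M.submatrix id c).det ≠ 0 := by
  have hspan : Submodule.span K (Set.range Mᵀ) = ⊤ := by
    apply Submodule.eq_top_of_finrank_eq
    rw [show Set.range Mᵀ = Set.range M.col from rfl, ← Matrix.rank_eq_finrank_span_cols, h, Module.finrank_fin_fun]
  obtain ⟨b, hbsub, hbspan, hbli⟩ := exists_linearIndependent K (Set.range Mᵀ)
  have hbtop : Submodule.span K (Set.range ((↑) : b → Fin k → K)) = ⊤ := by
    rw [Subtype.range_coe, hbspan, hspan]
  let B : Module.Basis b K (Fin k → K) := Module.Basis.mk hbli (by rw [hbtop])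
  have : Fintype b := FiniteDimensional.fintypeBasisIndex B
  have hcard : Fintype.card b = k := by
    have := Module.finrank_eq_card_basis B
    rw [Module.finrank_fin_fun] at this
    omega
  let e : Fin k ≃ b := (Fintype.equivFinOfCardEq hcard).symm
  have hchoice : ∀ x : b, ∃ j : Fin n, Mᵀ j = (x : Fin k → K) := fun x => hbsub x.2
  choose j hj using hchoice
  have hinj : Function.Injective (fun i : Fin k => j (e i)) := by
    intro i i' hii
    have h2 : ((e i : b) : Fin k → K) = ((e i' : b) : Fin k → K) := by
      rw [← hj (e i), ← hj (e i')]
      simp only at hii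
      rw [hii]
    exact e.injective (Subtype.ext h2)
  let c : Fin k ↪ Fin n := ⟨fun i => j (e i), hinj⟩
  refine ⟨c, ?_⟩
  have hli : LinearIndependent K (fun i : Fin k => (M.submatrix id c)ᵀ i) := by
    have heq : (fun i : Fin k => (M.submatrix id c)ᵀ i)
        = fun i => ((e i : b) : Fin k → K) := by
      funext i
      rw [← hj (e i)]
      rfl
    rw [heq]
    exact hbli.comp e e.injective
  have hu := Matrix.linearIndependent_cols_iff_isUnit.mp hli
  intro hdet
  rw [Matrix.isUnit_iff_isUnit_det, hdet] at hu
  exact hu.ne_zero rfl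

lemma aux_minor_smul_mem {d k n : ℕ} (A : Matrix (Fin k) (Fin n) (LaurentR d))
    (c : Fin k ↪ Fin n) (x : Fin k → LaurentR d) :
    (A.submatrix id c).det • x ∈ colSpan A := by
  set B := A.submatrix id c with hB
  have hmv : ∀ w : Fin k → LaurentR d, B *ᵥ w ∈ colSpan A := by
    intro w
    have : B *ᵥ w = ∑ j : Fin k, w j • (fun i => A i (c j)) := by
      funext i
      simp [Matrix.mulVec, dotProduct, Finset.sum_apply, hB, mul_comm]
    rw [this]
    exact Submodule.sum_mem _ fun j _ =>
      Submodule.smul_mem _ _ (Submodule.subset_span ⟨c j, rfl⟩)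
  have key : B.det • x = B *ᵥ (B.adjugate *ᵥ x) := by
    rw [Matrix.mulVec_mulVec, Matrix.mul_adjugate, Matrix.smul_mulVec,
      Matrix.one_mulVec]
  rw [key]
  exact hmv _

theorem principal_associated_prime_divides_gcd (d k n : ℕ)
    (A : Matrix (Fin k) (Fin n) (LaurentR d))
    -- `A` has rank `k` over the fraction field of `R`
    (hrank : (A.map (algebraMap (LaurentR d) (FractionRing (LaurentR d)))).rank = k)
    -- `g` is a greatest common divisor of the `k × k` minors of `A`
    (g : LaurentR d)
    (hg_dvd : ∀ c : Fin k ↪ Fin n, g ∣ (A.submatrix id c).det)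
    (hg_gcd : ∀ h : LaurentR d, (∀ c : Fin k ↪ Fin n, h ∣ (A.submatrix id c).det) → h ∣ g)
    -- `P` is a principal associated prime of `M_A`
    (P : Ideal (LaurentR d))
    (hP : P ∈ associatedPrimes (LaurentR d) (MA A))
    (hPrin : P.IsPrincipal) :
    ∃ π : LaurentR d, Irreducible π ∧ π ∣ g ∧ P = Ideal.span {π} := by
  obtain ⟨hprime, x, hx⟩ := hP
  obtain ⟨x₀, rfl⟩ := Submodule.Quotient.mk_surjective (colSpan A) x
  -- every k×k minor lies in P
  have hmem : ∀ c : Fin k ↪ Fin n, (A.submatrix id c).det ∈ P := by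
    intro c
    rw [hx]; refine Ideal.le_radical ?_; rw [Submodule.mem_colon_singleton, Submodule.mem_bot]
    rw [← Submodule.Quotient.mk_smul, Submodule.Quotient.mk_eq_zero]
    exact aux_minor_smul_mem A c x₀
  -- some minor is nonzero
  obtain ⟨c₀, hc₀⟩ := aux_exists_minor_ne_zero
    (A.map (algebraMap (LaurentR d) (FractionRing (LaurentR d)))) hrank
  have hminor : (A.submatrix id c₀).det ≠ 0 := by
    intro h0
    apply hc₀
    have : (A.map (algebraMap (LaurentR d) (FractionRing (LaurentR d)))).submatrix id c₀
        = (A.submatrix id c₀).map (algebraMap (LaurentR d) (FractionRing (LaurentR d))) := rfl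
    rw [this]
    have h2 : (A.submatrix id c₀).map (algebraMap (LaurentR d) (FractionRing (LaurentR d)))
        = (algebraMap (LaurentR d) (FractionRing (LaurentR d))).mapMatrix (A.submatrix id c₀) := rfl
    rw [h2, ← RingHom.map_det, h0, map_zero]
  obtain ⟨π, hπ⟩ := hPrin
  have hπeq : P = Ideal.span {π} := hπ
  have hπ0 : π ≠ 0 := by
    intro h0
    apply hminor
    have := hmem c₀
    rw [hπeq, h0, Ideal.span_singleton_eq_bot.mpr rfl] at this
    simpa using this
  have hπprime : Prime π := (Ideal.span_singleton_prime hπ0).mp (hπeq ▸ hprime)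
  refine ⟨π, ?_, hg_gcd π fun c => ?_, hπeq⟩
  · haveI : IsDomain (LaurentR d) := NoZeroDivisors.to_isDomain _
    exact @Prime.irreducible (LaurentR d)
      _ _ π hπprime
  · exact Ideal.mem_span_singleton.mp (hπeq ▸ hmem c)
end
end

section
/- Let A be a k×n matrix over R of rank k, and let g ∈ R be a greatest common divisor of the k×k minors of A. Then the set of principal associated primes of M_A = R^k/AR^n is exactly the set of ideals ⟨π⟩ where π ranges over the irreducible elements of R dividing g. In particular, every irreducible factor of g generates an associated prime of M_A. -/
noncomputable section

set_option linter.unusedSectionVars false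
set_option maxHeartbeats 1000000

open Matrix

theorem dvd_of_alg_dvd_alg {R S : Type*} [CommRing R] [CommRing S] [Algebra R S]
    (M : Submonoid R) [IsLocalization M S]
    (halg : Function.Injective (algebraMap R S)) {p : R} (hp : Prime p)
    (hpM : ∀ t : M, ¬ p ∣ t) {y : R} (h : algebraMap R S p ∣ algebraMap R S y) : p ∣ y := by
  obtain ⟨c, hc⟩ := h
  obtain ⟨⟨z, t⟩, hz⟩ := IsLocalization.surj M c
  simp only at hz
  have : algebraMap R S (y * t) = algebraMap R S (p * z) := by
    rw [_root_.map_mul, hc, _root_.map_mul, mul_assoc, hz]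
  have h2 : p ∣ y * t := (halg this) ▸ ⟨z, rfl⟩
  rcases hp.dvd_mul.mp h2 with h | h
  · exact h
  · exact absurd h (hpM t)

theorem ufm_of_isLocalization {R S : Type*} [CommRing R] [IsDomain R]
    [UniqueFactorizationMonoid R] [CommRing S] [IsDomain S] [Algebra R S]
    (M : Submonoid R) (hM : M ≤ nonZeroDivisors R) [IsLocalization M S] :
    UniqueFactorizationMonoid S := by
  have halg : Function.Injective (algebraMap R S) := IsLocalization.injective S hM
  have hdvd : ∀ (a : R) (b : S), algebraMap R S a ∣ b →
      ∃ (x : R) (s t : M), b * algebraMap R S s = algebraMap R S x ∧ a ∣ x * t := by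
    rintro a b ⟨c, hc⟩
    obtain ⟨⟨x, s⟩, hx⟩ := IsLocalization.surj M b
    obtain ⟨⟨y, t⟩, hy⟩ := IsLocalization.surj M c
    simp only at hx hy
    refine ⟨x, s, t, hx, ?_⟩
    have : algebraMap R S (x * t) = algebraMap R S (a * (y * s)) := by
      rw [_root_.map_mul, ← hx, hc, _root_.map_mul, _root_.map_mul]
      calc algebraMap R S a * c * algebraMap R S s * algebraMap R S t
          = algebraMap R S a * (c * algebraMap R S t) * algebraMap R S s := by ring
        _ = _ := by rw [hy]; ring
    exact ⟨y * s, halg this⟩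
  have hunit : ∀ a : R, IsUnit (algebraMap R S a) → ∃ t : M, a ∣ t := by
    intro a ha
    obtain ⟨x, s, t, hxb, hdv⟩ := hdvd a 1 (isUnit_iff_dvd_one.mp ha)
    have hxs : (s : R) = x := halg (by simpa using hxb)
    exact ⟨s * t, by rw [Submonoid.coe_mul, hxs]; exact hdv⟩
  have hprime : ∀ p : R, Prime p → (∀ t : M, ¬ p ∣ t) → Prime (algebraMap R S p) := by
    intro p hp hpM
    refine ⟨fun h0 => hp.1 (by simpa using halg (h0 ▸ (_root_.map_zero (algebraMap R S)).symm)), ?_, ?_⟩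
    · intro hu
      obtain ⟨t, ht⟩ := hunit p hu
      exact hpM t ht
    · intro b c hbc
      obtain ⟨x, s, t, hxb, hdx⟩ := hdvd p (b * c) hbc
      obtain ⟨⟨xb, sb⟩, hb⟩ := IsLocalization.surj M b
      obtain ⟨⟨xc, sc⟩, hc⟩ := IsLocalization.surj M c
      simp only at hb hc
      have he : algebraMap R S (x * (sb * sc)) = algebraMap R S (xb * xc * s) := by
        rw [_root_.map_mul, ← hxb, _root_.map_mul, _root_.map_mul, _root_.map_mul]
        calc b * c * algebraMap R S s * (algebraMap R S sb * algebraMap R S sc)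
            = (b * algebraMap R S sb) * (c * algebraMap R S sc) * algebraMap R S s := by ring
          _ = _ := by rw [hb, hc]
      have he' := halg he
      have hpxbxc : p ∣ xb * xc := by
        have h2 : p ∣ x * t * (sb * sc) := hdx.mul_right _
        have h3 : x * t * ((sb : R) * sc) = xb * xc * s * t := by
          rw [show x * (t : R) * ((sb : R)*sc) = x * ((sb : R)*sc) * t by ring, he']
        rw [h3] at h2
        rcases hp.dvd_mul.mp h2 with h | h
        · rcases hp.dvd_mul.mp h with h' | h'
          · exact h'
          · exact absurd h' (hpM s)
        · exact absurd h (hpM t)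
      have key : ∀ (z : S) (xz : R) (sz : M), z * algebraMap R S sz = algebraMap R S xz →
          p ∣ xz → algebraMap R S p ∣ z := by
        intro z xz sz hz ⟨u, hu⟩
        refine ⟨algebraMap R S u * IsLocalization.mk' S 1 sz, ?_⟩
        have hmk : IsLocalization.mk' S (1:R) sz * algebraMap R S sz = 1 := by
          rw [IsLocalization.mk'_spec, _root_.map_one]
        calc z = z * (algebraMap R S sz * IsLocalization.mk' S 1 sz) := by
                rw [mul_comm (algebraMap R S (sz:R)), hmk, mul_one]
          _ = (z * algebraMap R S sz) * IsLocalization.mk' S 1 sz := by ring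
          _ = algebraMap R S (p * u) * IsLocalization.mk' S 1 sz := by rw [hz, hu]
          _ = _ := by rw [_root_.map_mul]; ring
      rcases hp.dvd_mul.mp hpxbxc with h | h
      · exact Or.inl (key b xb sb hb h)
      · exact Or.inr (key c xc sc hc h)
  -- now assemble prime factorizations
  refine UniqueFactorizationMonoid.of_exists_prime_factors (fun a ha => ?_)
  obtain ⟨⟨x, s⟩, hx⟩ := IsLocalization.surj M a
  simp only at hx
  have hxa : Associated (algebraMap R S x) a := by
    refine Associated.symm ⟨(IsLocalization.map_units S s).unit, ?_⟩; simpa using hx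
  have hx0 : x ≠ 0 := by
    rintro rfl
    rw [_root_.map_zero] at hxa
    exact ha ((associated_zero_iff_eq_zero a).mp hxa.symm)
  obtain ⟨f, hfp, hfx⟩ := UniqueFactorizationMonoid.exists_prime_factors x hx0
  classical
  -- split factors into those dividing an element of M (units) and others (primes)
  let P : R → Prop := fun q => ∃ t : M, q ∣ t
  refine ⟨(f.filter (fun q => ¬ P q)).map (algebraMap R S), ?_, ?_⟩
  · intro b hb
    obtain ⟨q, hq, rfl⟩ := Multiset.mem_map.mp hb
    have hq' := Multiset.mem_filter.mp hq
    exact hprime q (hfp q hq'.1) (fun t ht => hq'.2 ⟨t, ht⟩)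
  · -- product associated to a
    have hsplit : f.filter (fun q => ¬ P q) + f.filter P = f := by
      rw [add_comm]; exact Multiset.filter_add_not P f
    have hu : ∀ (g : Multiset R), (∀ q ∈ g, P q) → IsUnit ((g.map (algebraMap R S)).prod) := by
      intro g hg
      induction g using Multiset.induction with
      | empty => simp
      | cons q g ih =>
        simp only [Multiset.map_cons, Multiset.prod_cons]
        obtain ⟨t, ht⟩ := hg q (Multiset.mem_cons_self q g)
        exact (isUnit_of_dvd_unit (map_dvd _ ht) (IsLocalization.map_units S t)).mul
          (ih (fun q hq => hg q (Multiset.mem_cons_of_mem hq)))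
    have hprodsplit : ((f.filter (fun q => ¬ P q)).map (algebraMap R S)).prod *
        ((f.filter P).map (algebraMap R S)).prod = algebraMap R S f.prod := by
      rw [← Multiset.prod_add, ← Multiset.map_add, hsplit, ← map_multiset_prod]
    have h1 : Associated (((f.filter (fun q => ¬ P q)).map (algebraMap R S)).prod)
        (algebraMap R S f.prod) := by
      obtain ⟨u, hu'⟩ := hu (f.filter P) (fun q hq => (Multiset.mem_filter.mp hq).2)
      exact ⟨u, by rw [hu', hprodsplit]⟩
    exact h1.trans ((hfx.map (algebraMap R S)).trans hxa)

instance (d : ℕ) : IsDomain (LaurentR d) := NoZeroDivisors.to_isDomain _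

namespace LaurentAux
variable (d : ℕ)

def expEmb : (Fin d →₀ ℕ) →+ (Fin d → ℤ) :=
  (Finsupp.coeFnAddHom : (Fin d →₀ ℤ) →+ (Fin d → ℤ)).comp
    (Finsupp.mapRange.addMonoidHom (Nat.castAddMonoidHom ℤ))

variable {d} in
lemma expEmb_apply (m : Fin d →₀ ℕ) (i : Fin d) : expEmb d m i = (m i : ℤ) := by
  simp [expEmb]

lemma expEmb_injective : Function.Injective (expEmb d) := by
  intro a b h
  ext i
  have := congrFun h i
  rw [expEmb_apply, expEmb_apply] at this
  exact_mod_cast this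

def phi : MvPolynomial (Fin d) ℤ →+* LaurentR d :=
  AddMonoidAlgebra.mapDomainRingHom ℤ (expEmb d)

lemma phi_injective : Function.Injective (phi d) :=
  AddMonoidAlgebra.mapDomain_injective (expEmb_injective d)

variable {d} in
lemma phi_monomial (m : Fin d →₀ ℕ) (r : ℤ) :
    phi d (MvPolynomial.monomial m r) = AddMonoidAlgebra.single (expEmb d m) r := by
  show AddMonoidAlgebra.mapDomain (expEmb d) (MvPolynomial.monomial m r) = _
  rw [← MvPolynomial.single_eq_monomial]
  exact AddMonoidAlgebra.mapDomain_single

/-- The submonoid of monic monomials. -/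
def S : Submonoid (MvPolynomial (Fin d) ℤ) where
  carrier := Set.range fun m : Fin d →₀ ℕ => MvPolynomial.monomial m 1
  mul_mem' := by
    rintro _ _ ⟨m, rfl⟩ ⟨m', rfl⟩
    exact ⟨m + m', by rw [MvPolynomial.monomial_mul, one_mul]⟩
  one_mem' := ⟨0, by simp⟩

variable {d} in
lemma single_isUnit (a : Fin d → ℤ) : IsUnit (AddMonoidAlgebra.single a (1:ℤ) : LaurentR d) := by
  refine IsUnit.of_mul_eq_one (AddMonoidAlgebra.single (-a) 1) ?_
  rw [AddMonoidAlgebra.single_mul_single, add_neg_cancel, one_mul, AddMonoidAlgebra.one_def]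

lemma phi_surj (z : LaurentR d) :
    ∃ (x : MvPolynomial (Fin d) ℤ) (m : Fin d →₀ ℕ),
      z * phi d (MvPolynomial.monomial m 1) = phi d x := by
  induction z using AddMonoidAlgebra.induction with
  | zero => exact ⟨0, 0, by simp⟩
  | single_add a b f _ _ ih =>
    obtain ⟨x, m, hx⟩ := ih
    set ma : Fin d →₀ ℕ := Finsupp.equivFunOnFinite.symm fun i => (-(a i)).toNat with hma
    set mp : Fin d →₀ ℕ := Finsupp.equivFunOnFinite.symm fun i => (a i).toNat with hmp
    have hkey : a + expEmb d ma = expEmb d mp := by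
      funext i
      simp only [Pi.add_apply, expEmb_apply, hma, hmp, Finsupp.coe_equivFunOnFinite_symm]
      omega
    have hsingle : (AddMonoidAlgebra.single a b : LaurentR d) * phi d (MvPolynomial.monomial ma 1)
        = phi d (MvPolynomial.monomial mp b) := by
      rw [phi_monomial, phi_monomial, AddMonoidAlgebra.single_mul_single, mul_one, hkey]
    refine ⟨x * MvPolynomial.monomial ma 1 + MvPolynomial.monomial mp b * MvPolynomial.monomial m 1,
      ma + m, ?_⟩
    have hmam : phi d (MvPolynomial.monomial (ma + m) 1)
        = phi d (MvPolynomial.monomial ma 1) * phi d (MvPolynomial.monomial m 1) := by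
      rw [← _root_.map_mul, MvPolynomial.monomial_mul, one_mul]
    rw [_root_.map_add, add_mul, hmam, _root_.map_mul, _root_.map_mul]
    rw [← mul_assoc, hsingle, mul_left_comm, hx]
    ring

instance : Algebra (MvPolynomial (Fin d) ℤ) (LaurentR d) := (phi d).toAlgebra

lemma algebraMap_eq : algebraMap (MvPolynomial (Fin d) ℤ) (LaurentR d) = phi d := rfl

instance : IsLocalization (S d) (LaurentR d) where
  map_units := by
    rintro ⟨_, m, rfl⟩
    show IsUnit (phi d (MvPolynomial.monomial m 1))
    rw [phi_monomial]
    exact single_isUnit _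
  surj := by
    intro z
    obtain ⟨x, m, hx⟩ := phi_surj d z
    exact ⟨⟨x, ⟨MvPolynomial.monomial m 1, ⟨m, rfl⟩⟩⟩, hx⟩
  exists_of_eq := by
    intro x y h
    exact ⟨1, by rw [phi_injective d h]⟩

lemma S_le_nonZeroDivisors : S d ≤ nonZeroDivisors (MvPolynomial (Fin d) ℤ) := by
  rintro _ ⟨m, rfl⟩
  exact mem_nonZeroDivisors_of_ne_zero (fun h => one_ne_zero ((MvPolynomial.monomial_eq_zero).mp h))

end LaurentAux

instance (d : ℕ) : IsNoetherianRing (LaurentR d) :=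
  IsLocalization.isNoetherianRing (LaurentAux.S d) _ inferInstance


instance (d : ℕ) : UniqueFactorizationMonoid (LaurentR d) :=
  ufm_of_isLocalization (LaurentAux.S d) (LaurentAux.S_le_nonZeroDivisors d)

theorem span_cols_eq_top_iff {F : Type*} [Field F] {k n : ℕ} (B : Matrix (Fin k) (Fin n) F) :
    Submodule.span F (Set.range Bᵀ) = ⊤ ↔ ∃ c : Fin k ↪ Fin n, (B.submatrix id c).det ≠ 0 := by
  constructor
  · intro hspan
    obtain ⟨b, hbsub, hbspan, hbind⟩ := exists_linearIndependent F (Set.range Bᵀ)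
    rw [hspan] at hbspan
    let basis : Module.Basis b F (Fin k → F) := Module.Basis.mk hbind (by rw [Subtype.range_coe, hbspan])
    have : Fintype b := FiniteDimensional.fintypeBasisIndex basis
    have hcard : Fintype.card b = k := by
      have h1 := Module.finrank_eq_card_basis basis
      rw [Module.finrank_fin_fun] at h1
      exact h1.symm
    let e : Fin k ≃ b := (Fintype.equivFinOfCardEq hcard).symm
    have hj : ∀ x : b, ∃ j : Fin n, Bᵀ j = (x : Fin k → F) := fun x => hbsub x.2
    choose j hjspec using hj
    have hjinj : Function.Injective j := by
      intro x y hxy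
      have : (x : Fin k → F) = y := by rw [← hjspec x, ← hjspec y, hxy]
      exact Subtype.ext this
    have hcinj : Function.Injective (fun i => j (e i)) := hjinj.comp e.injective
    let cemb : Fin k ↪ Fin n := ⟨fun i => j (e i), hcinj⟩
    refine ⟨cemb, ?_⟩
    set D := B.submatrix id cemb with hD
    have hcols : ∀ i, Dᵀ i = ((e i : Fin k → F)) := by
      intro i
      funext r
      have := congrFun (hjspec (e i)) r
      simpa [hD, cemb, Matrix.transpose_apply, Matrix.submatrix_apply] using this
    have hind : LinearIndependent F Dᵀ := by
      have : Dᵀ = (fun x : b => (x : Fin k → F)) ∘ e := by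
        funext i; exact hcols i
      rw [this]
      exact hbind.comp e e.injective
    intro h0
    obtain ⟨v, hv0, hv⟩ := (Matrix.exists_mulVec_eq_zero_iff).mpr h0
    have hinj : Function.Injective D.mulVec := Matrix.mulVec_injective_iff.mpr hind
    exact hv0 (hinj (by rw [hv, Matrix.mulVec_zero]))
  · rintro ⟨c, hc⟩
    have hunit : IsUnit (B.submatrix id c) := (isUnit_iff_isUnit_det _).mpr (isUnit_iff_ne_zero.mpr hc)
    have hsurj : Function.Surjective (B.submatrix id c).mulVec :=
      mulVec_surjective_iff_isUnit.mpr hunit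
    have htop : Submodule.span F (Set.range (B.submatrix id c)ᵀ) = ⊤ := by
      show Submodule.span F (Set.range (B.submatrix id c).col) = ⊤
      rw [← Matrix.range_mulVecLin, LinearMap.range_eq_top]
      exact hsurj
    rw [eq_top_iff, ← htop]
    apply Submodule.span_le.mpr
    rintro _ ⟨i, rfl⟩
    exact Submodule.subset_span ⟨c i, rfl⟩


section Main
variable {R : Type*} [CommRing R] [IsDomain R] [IsNoetherianRing R]
    [UniqueFactorizationMonoid R] {k n : ℕ} (A : Matrix (Fin k) (Fin n) R)

/-- generic localized-module zero criterion -/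
theorem lm_mk_eq_zero {M : Type*} [AddCommGroup M] [Module R M] (S₀ : Submonoid R)
    (m : M) (s : S₀) :
    (LocalizedModule.mk m s : LocalizedModule S₀ M) = 0 ↔ ∃ u : S₀, u • m = 0 := by
  rw [(LocalizedModule.zero_mk 1).symm, LocalizedModule.mk_eq]
  constructor
  · rintro ⟨u, hu⟩; exact ⟨u, by simpa using hu⟩
  · rintro ⟨u, hu⟩; exact ⟨u, by simpa using hu⟩

theorem det_smul_mem (c : Fin k ↪ Fin n) (v : Fin k → R) :
    (A.submatrix id c).det • v ∈ Submodule.span R (Set.range Aᵀ) := by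
  set B := A.submatrix id c with hB
  have h1 : B.mulVec (B.adjugate.mulVec v) = B.det • v := by
    rw [Matrix.mulVec_mulVec, Matrix.mul_adjugate, Matrix.smul_mulVec, Matrix.one_mulVec]
  rw [← h1]
  have h2 : B.mulVec (B.adjugate.mulVec v) = ∑ j, (B.adjugate.mulVec v) j • Aᵀ (c j) := by
    funext i
    simp only [Matrix.mulVec, dotProduct, Finset.sum_apply, Pi.smul_apply, smul_eq_mul,
      Matrix.transpose_apply, hB, Matrix.submatrix_apply, id_eq]
    exact Finset.sum_congr rfl fun j _ => mul_comm _ _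
  rw [h2]
  exact Submodule.sum_mem _ fun j _ =>
    Submodule.smul_mem _ _ (Submodule.subset_span ⟨c j, rfl⟩)

theorem main_general (c₀ : Fin k ↪ Fin n) (hc₀ : (A.submatrix id c₀).det ≠ 0) (g : R)
    (hg_dvd : ∀ c : Fin k ↪ Fin n, g ∣ (A.submatrix id c).det)
    (hg_gcd : ∀ h : R, (∀ c : Fin k ↪ Fin n, h ∣ (A.submatrix id c).det) → h ∣ g) :
    {P | P ∈ associatedPrimes R ((Fin k → R) ⧸ Submodule.span R (Set.range Aᵀ)) ∧ P.IsPrincipal}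
      = {P : Ideal R | ∃ π : R, Irreducible π ∧ π ∣ g ∧ P = Ideal.span {π}} := by
  set C := Submodule.span R (Set.range Aᵀ) with hC
  have hkill : ∀ (c : Fin k ↪ Fin n) (m : (Fin k → R) ⧸ C),
      (A.submatrix id c).det • m = 0 := by
    intro c m
    obtain ⟨v, rfl⟩ := Submodule.Quotient.mk_surjective _ m
    rw [← Submodule.Quotient.mk_smul, Submodule.Quotient.mk_eq_zero]
    exact det_smul_mem A c v
  ext P
  simp only [Set.mem_setOf_eq]
  constructor
  · rintro ⟨⟨hPprime, m, hPann⟩, hPpr⟩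
    obtain ⟨π, hπ⟩ := hPpr
    rw [Ideal.submodule_span_eq] at hπ
    have hdet_mem : ∀ c : Fin k ↪ Fin n, (A.submatrix id c).det ∈ P := by
      intro c
      rw [hPann]
      refine Ideal.le_radical ?_
      rw [Submodule.mem_colon_singleton, Submodule.mem_bot]
      exact hkill c m
    have hπ0 : π ≠ 0 := by
      rintro rfl
      rw [Set.singleton_zero, Ideal.span_zero] at hπ
      exact hc₀ (by simpa [hπ] using hdet_mem c₀)
    have hprime : Prime π := (Ideal.span_singleton_prime hπ0).mp (hπ ▸ hPprime)
    refine ⟨π, hprime.irreducible,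
      hg_gcd π (fun c => Ideal.mem_span_singleton.mp (hπ ▸ hdet_mem c)), hπ⟩
  · rintro ⟨π, hirr, hπg, rfl⟩
    have hπprime : Prime π := UniqueFactorizationMonoid.irreducible_iff_prime.mp hirr
    set p : Ideal R := Ideal.span {π} with hp
    have hpprime : p.IsPrime := (Ideal.span_singleton_prime hπprime.ne_zero).mpr hπprime
    have hπdet : ∀ c : Fin k ↪ Fin n, π ∣ (A.submatrix id c).det :=
      fun c => hπg.trans (hg_dvd c)
    haveI := hpprime
    set Rp := Localization.AtPrime p with hRp
    set Mp := LocalizedModule p.primeCompl ((Fin k → R) ⧸ C) with hMp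
    -- Step 1 : Mp is nontrivial
    have hMp_nontrivial : Nontrivial Mp := by
      rw [← not_subsingleton_iff_nontrivial]
      intro hsub
      -- each basis vector is locally in the column span
      have hsi : ∀ i : Fin k, ∃ s : p.primeCompl, (s : R) • (Pi.single i 1 : Fin k → R) ∈ C := by
        intro i
        have h0 : (LocalizedModule.mk (Submodule.Quotient.mk (Pi.single i 1)) 1 : Mp) = 0 :=
          Subsingleton.elim _ _
        obtain ⟨u, hu⟩ := (lm_mk_eq_zero p.primeCompl _ 1).mp h0
        refine ⟨u, ?_⟩
        rwa [← Submodule.Quotient.mk_smul, Submodule.Quotient.mk_eq_zero] at hu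
      choose si hsi_mem using hsi
      set s : R := ∏ i, (si i : R) with hs
      have hsC : ∀ i : Fin k, s • (Pi.single i 1 : Fin k → R) ∈ C := by
        intro i
        rw [hs, ← Finset.prod_erase_mul _ _ (Finset.mem_univ i), mul_smul]
        exact Submodule.smul_mem _ _ (hsi_mem i)
      have hs_not : s ∉ p := by
        intro hmem
        rw [hs, Finset.prod_eq_multiset_prod] at hmem
        obtain ⟨b, hbmem, hbp⟩ := (hpprime.multiset_prod_mem_iff_exists_mem _).mp hmem
        obtain ⟨i, -, rfl⟩ := Multiset.mem_map.mp hbmem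
        exact (si i).2 hbp
      -- coefficients
      have hw : ∀ i : Fin k, ∃ w : Fin n → R,
          ∑ j, w j • Aᵀ j = s • (Pi.single i 1 : Fin k → R) :=
        fun i => (Submodule.mem_span_range_iff_exists_fun R).mp (hsC i)
      choose w hw_spec using hw
      -- pass to the fraction field of R/p
      set F := FractionRing (R ⧸ p) with hF
      set ψ : R →+* F := (algebraMap (R ⧸ p) F).comp (Ideal.Quotient.mk p) with hψ
      have hψπ : ψ π = 0 := by
        rw [hψ, RingHom.comp_apply, Ideal.Quotient.eq_zero_iff_mem.mpr (Ideal.subset_span rfl : π ∈ p), _root_.map_zero]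
      have hψs : ψ s ≠ 0 := by
        intro h
        have : (Ideal.Quotient.mk p) s = 0 :=
          IsFractionRing.injective (R ⧸ p) F (by simpa [hψ] using h)
        exact hs_not (Ideal.Quotient.eq_zero_iff_mem.mp this)
      have hψdet : ∀ c : Fin k ↪ Fin n, ((A.map ψ).submatrix id c).det = 0 := by
        intro c
        have hd : ((A.map ψ).submatrix id c).det = ψ ((A.submatrix id c).det) := by
          rw [Matrix.submatrix_map, ← RingHom.mapMatrix_apply, ← RingHom.map_det]
        obtain ⟨t, ht⟩ := hπdet c
        rw [hd, ht, _root_.map_mul, hψπ, zero_mul]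
      -- the columns of A.map ψ span everything
      have hspan : Submodule.span F (Set.range (A.map ψ)ᵀ) = ⊤ := by
        have hsingle : ∀ i : Fin k, (Pi.single i 1 : Fin k → F)
            ∈ Submodule.span F (Set.range (A.map ψ)ᵀ) := by
          intro i
          have heq : ∑ j, ψ (w i j) • (A.map ψ)ᵀ j = ψ s • (Pi.single i 1 : Fin k → F) := by
            funext r
            have h2 := congrArg ψ (congrFun (hw_spec i) r)
            simp only [Finset.sum_apply, Pi.smul_apply, smul_eq_mul, Matrix.transpose_apply,
              map_sum, _root_.map_mul] at h2
            simp only [Finset.sum_apply, Pi.smul_apply, smul_eq_mul, Matrix.transpose_apply,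
              Matrix.map_apply]
            rw [h2]
            congr 1
            by_cases hri : r = i <;> simp [Pi.single_apply, hri]
          have hmem : ψ s • (Pi.single i 1 : Fin k → F)
              ∈ Submodule.span F (Set.range (A.map ψ)ᵀ) := by
            rw [← heq]
            exact Submodule.sum_mem _ fun j _ =>
              Submodule.smul_mem _ _ (Submodule.subset_span ⟨j, rfl⟩)
          have := Submodule.smul_mem _ (ψ s)⁻¹ hmem
          rwa [smul_smul, inv_mul_cancel₀ hψs, one_smul] at this
        rw [eq_top_iff]
        intro x _
        have hx : x = ∑ i, x i • (Pi.single i 1 : Fin k → F) := by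
          funext r
          simp [Pi.single_apply, Finset.sum_apply]
        rw [hx]
        exact Submodule.sum_mem _ fun i _ => Submodule.smul_mem _ _ (hsingle i)
      obtain ⟨c, hcdet⟩ := (span_cols_eq_top_iff (A.map ψ)).mp hspan
      exact hcdet (hψdet c)
    -- Step 2: get an associated prime of the localized module
    haveI : IsNoetherianRing Rp := IsLocalization.isNoetherianRing p.primeCompl _ ‹_›
    haveI := hMp_nontrivial
    obtain ⟨P, hPass⟩ := associatedPrimes.nonempty Rp Mp
    obtain ⟨hPprime, x, hPx⟩ := isAssociatedPrime_iff.mp hPass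
    obtain ⟨m, sden, hx⟩ : ∃ (m : (Fin k → R) ⧸ C) (sden : p.primeCompl),
        x = LocalizedModule.mk m sden := by
      induction x using LocalizedModule.induction_on with
      | h m s => exact ⟨m, s, rfl⟩
    -- contraction of P
    set Q := P.comap (algebraMap R Rp) with hQ
    haveI hQprime : Q.IsPrime := hPprime.comap _
    have hmemP : ∀ r : R, r ∈ Q ↔ algebraMap R Rp r • x = 0 := by
      intro r
      rw [hQ, Ideal.mem_comap, hPx, Submodule.mem_colon_singleton, Submodule.mem_bot]
    have hmemP' : ∀ r : R, r ∈ Q ↔ (LocalizedModule.mk (r • m) sden : Mp) = 0 := by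
      intro r
      rw [hmemP, hx, algebraMap_smul, LocalizedModule.smul'_mk]
    set δ := (A.submatrix id c₀).det with hδ
    have hδQ : δ ∈ Q := by
      rw [hmemP', hkill c₀ m]
      exact (lm_mk_eq_zero _ _ _).mpr ⟨1, by simp⟩
    have hQp : Q ≤ p := by
      intro q hq
      by_contra hq'
      have : IsUnit (algebraMap R Rp q) := IsLocalization.map_units Rp (⟨q, hq'⟩ : p.primeCompl)
      exact hPprime.ne_top (Ideal.eq_top_of_isUnit_mem _ ((Ideal.mem_comap).mp hq) this)
    -- Q = p
    have hpQ : p ≤ Q := by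
      obtain ⟨f, hfp, hfa⟩ := UniqueFactorizationMonoid.exists_prime_factors δ hc₀
      obtain ⟨uu, huu⟩ := hfa
      have hfQ : f.prod ∈ Q := by
        have : f.prod = δ * (uu⁻¹ : Rˣ) := by
          rw [← huu, mul_assoc]
          simp
        rw [this]
        exact Ideal.mul_mem_right _ _ hδQ
      obtain ⟨b, hbf, hbQ⟩ := (hQprime.multiset_prod_mem_iff_exists_mem _).mp hfQ
      obtain ⟨t, hbt⟩ := Ideal.mem_span_singleton.mp (hQp hbQ)
      have htunit : IsUnit t := by
        rcases (hfp b hbf).irreducible.isUnit_or_isUnit hbt with h | h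
        · exact absurd h hπprime.not_unit
        · exact h
      obtain ⟨tu, rfl⟩ := htunit
      have hπQ : π ∈ Q := by
        have : π = b * (tu⁻¹ : Rˣ) := by rw [hbt, mul_assoc]; simp
        rw [this]
        exact Ideal.mul_mem_right _ _ hbQ
      rw [hp, Ideal.span_le, Set.singleton_subset_iff]
      exact hπQ
    have hQeq : Q = p := le_antisymm hQp hpQ
    -- now build the element of the original module
    have hπx : (LocalizedModule.mk (π • m) sden : Mp) = 0 :=
      (hmemP' π).mp (hQeq ▸ (Ideal.subset_span rfl : π ∈ p))
    obtain ⟨u, hu⟩ := (lm_mk_eq_zero _ _ _).mp hπx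
    set m' : (Fin k → R) ⧸ C := (u : R) • m with hm'
    have hann : p = (⊥ : Submodule R ((Fin k → R) ⧸ C)).colon {m'} := by
      ext r
      rw [Submodule.mem_colon_singleton, Submodule.mem_bot, hp, Ideal.mem_span_singleton]
      constructor
      · rintro ⟨t, rfl⟩
        have hu' : ((u : R) * π) • m = 0 := by
          rw [mul_smul]; exact hu
        rw [hm', smul_smul, show π * t * (u : R) = t * ((u : R) * π) by ring,
          mul_smul, hu', smul_zero]
      · intro hr
        have h1 : (r * (u : R)) • m = 0 := by
          rw [mul_smul]
          rw [hm'] at hr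
          exact hr
        have h2 : r * (u : R) ∈ Q := by
          rw [hmemP']
          rw [h1]
          exact (lm_mk_eq_zero _ _ _).mpr ⟨1, by simp⟩
        have h2' : r * (u : R) ∈ p := (le_of_eq hQeq) h2
        have h3 := Ideal.mem_span_singleton.mp h2'
        rcases hπprime.dvd_mul.mp h3 with h | h
        · exact h
        · exact absurd (Ideal.mem_span_singleton.mpr h : (u : R) ∈ p) u.2
    exact ⟨isAssociatedPrime_iff.mpr ⟨hpprime, m', hann⟩, ⟨π, by rw [Ideal.submodule_span_eq]⟩⟩
end Main

open Matrix in
theorem principal_associated_primes_eq_irreducible_factors_of_gcd (d k n : ℕ)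
    (A : Matrix (Fin k) (Fin n) (LaurentR d))
    -- `A` has rank `k` over the fraction field of `R`
    (hrank : (A.map (algebraMap (LaurentR d) (FractionRing (LaurentR d)))).rank = k)
    -- `g` is a greatest common divisor of the `k × k` minors of `A`
    (g : LaurentR d)
    (hg_dvd : ∀ c : Fin k ↪ Fin n, g ∣ (A.submatrix id c).det)
    (hg_gcd : ∀ h : LaurentR d, (∀ c : Fin k ↪ Fin n, h ∣ (A.submatrix id c).det) → h ∣ g) :
    {P | P ∈ associatedPrimes (LaurentR d) (MA A) ∧ P.IsPrincipal}
      = {P : Ideal (LaurentR d) | ∃ π : LaurentR d,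
          Irreducible π ∧ π ∣ g ∧ P = Ideal.span {π}} := by
  set K := FractionRing (LaurentR d)
  set f := algebraMap (LaurentR d) K
  set B := A.map f with hB
  have h1 : Module.finrank K (LinearMap.range B.mulVecLin) = k := hrank
  have htop : LinearMap.range B.mulVecLin = ⊤ :=
    Submodule.eq_top_of_finrank_eq (by rw [h1, Module.finrank_fin_fun])
  have hspan : Submodule.span K (Set.range Bᵀ) = ⊤ := by
    show Submodule.span K (Set.range B.col) = ⊤
    rw [← Matrix.range_mulVecLin]; exact htop
  obtain ⟨c₀, hc₀K⟩ := (span_cols_eq_top_iff B).mp hspan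
  have hdet_eq : (B.submatrix id c₀).det = f ((A.submatrix id c₀).det) := by
    rw [hB, Matrix.submatrix_map, ← RingHom.mapMatrix_apply, ← RingHom.map_det]
  have hc₀ : (A.submatrix id c₀).det ≠ 0 := by
    intro h0
    exact hc₀K (by rw [hdet_eq, h0, _root_.map_zero])
  have hmain := main_general A c₀ hc₀ g hg_dvd hg_gcd
  have hce : colSpan A = Submodule.span (LaurentR d) (Set.range Aᵀ) := rfl
  exact hmain

end
end

section
/- Let A be a k×n matrix over R of rank k, and let B_1,…,B_m (m = C(n,k)) be the k×k submatrices of A. Then the following are equivalent: (i) there is no point z ∈ (S¹)^d with ev_z(det B_j) = 0 for all j = 1,…,m; (ii) for every associated prime P of M_A = R^k/AR^n, there is no point z ∈ (S¹)^d with ev_z(f) = 0 for all f ∈ P. -/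
noncomputable section

/-- Evaluation of a Laurent polynomial `f ∈ R` at a point `z ∈ (ℂ∖{0})^d`:
the ring homomorphism sending `uᵢ` to `zᵢ`, computed as
`∑ over monomials m of (coefficient) * ∏ᵢ zᵢ^(mᵢ)`. -/
def ev {d : ℕ} (z : Fin d → ℂ) (f : LaurentR d) : ℂ :=
  Finsupp.sum f.coeff fun m c => (c : ℂ) * ∏ i, z i ^ (m i)

/-- The set of associated primes of a module, with the December 2024 Mathlib meaning of
`associatedPrimes`: prime ideals equal to the annihilator of some element. -/
def annAssociatedPrimes (R : Type*) [CommRing R] (M : Type*) [AddCommGroup M] [Module R M] :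
    Set (Ideal R) :=
  { I | I.IsPrime ∧ ∃ x : M, I = (Submodule.span R {x}).annihilator }

/-! ### Auxiliary material -/

instance (d : ℕ) : AddMonoid.FG (Fin d → ℤ) :=
  AddGroup.fg_iff_addMonoid_fg.mp (Module.Finite.iff_addGroup_fg.mp inferInstance)

instance inst_s7 (d : ℕ) : IsNoetherianRing (LaurentR d) :=
  Algebra.FiniteType.isNoetherianRing ℤ (LaurentR d)

/-- Evaluation as an algebra homomorphism (when all coordinates are nonzero). -/
def evHom {d : ℕ} (z : Fin d → ℂ) (hz : ∀ i, z i ≠ 0) : LaurentR d →+* ℂ :=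
  ((AddMonoidAlgebra.lift ℤ ℂ (Fin d → ℤ))
    { toFun := fun m => ∏ i, z i ^ (Multiplicative.toAdd m i)
      map_one' := by simp
      map_mul' := fun a b => by
        simp only [toAdd_mul, Pi.add_apply]
        rw [← Finset.prod_mul_distrib]
        exact Finset.prod_congr rfl fun i _ => zpow_add₀ (hz i) _ _ }).toRingHom

lemma ev_eq_evHom {d : ℕ} (z : Fin d → ℂ) (hz : ∀ i, z i ≠ 0) (f : LaurentR d) :
    ev z f = evHom z hz f := by
  rw [evHom, AlgHom.toRingHom_eq_coe, RingHom.coe_coe, AddMonoidAlgebra.lift_apply, ev]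
  refine Finsupp.sum_congr fun m _ => ?_
  rw [zsmul_eq_mul]
  rfl

/-- A column combination `M *ᵥ v` lies in the span of the columns of `M`. -/
lemma mulVec_eq_sum_cols {S : Type*} [CommRing S] {k n : ℕ}
    (M : Matrix (Fin k) (Fin n) S) (v : Fin n → S) :
    M.mulVec v = ∑ j, v j • (fun i => M i j) := by
  ext i
  simp [Matrix.mulVec, dotProduct, Finset.sum_apply, mul_comm]

/-- Any prime containing the annihilator of a finitely generated module over a Noetherian
ring contains an associated prime of the module. -/
theorem exists_isAssociatedPrime_le {R M : Type*} [CommRing R] [IsNoetherianRing R]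
    [AddCommGroup M] [Module R M] [Module.Finite R M] {Q : Ideal R} (hQ : Q.IsPrime)
    (hle : (⊤ : Submodule R M).annihilator ≤ Q) :
    ∃ P ∈ annAssociatedPrimes R M, P ≤ Q := by
  classical
  -- the kernel of localization at Q
  set N : Submodule R M :=
    { carrier := {m | ∃ s ∉ Q, s • m = 0}
      zero_mem' := ⟨1, (Ideal.ne_top_iff_one Q).mp hQ.ne_top, smul_zero 1⟩
      add_mem' := by
        rintro a b ⟨s, hs, hsa⟩ ⟨t, ht, htb⟩
        refine ⟨s * t, fun h => ((hQ.mem_or_mem h).elim hs ht), ?_⟩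
        have h1 : (s * t) • a = 0 := by rw [mul_comm, mul_smul, hsa, smul_zero]
        have h2 : (s * t) • b = 0 := by rw [mul_smul, htb, smul_zero]
        rw [smul_add, h1, h2, add_zero]
      smul_mem' := by
        rintro c m ⟨s, hs, hsm⟩
        exact ⟨s, hs, by rw [smul_comm, hsm, smul_zero]⟩ } with hNdef
  have hmemN : ∀ m : M, m ∈ N ↔ ∃ s ∉ Q, s • m = 0 := fun m => Iff.rfl
  -- N ≠ ⊤
  have hN : N ≠ ⊤ := by
    intro htop
    obtain ⟨S, hS⟩ := Module.Finite.fg_top (R := R) (M := M)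
    choose s hsQ hs using fun m : S => (hmemN m).mp (htop ▸ Submodule.mem_top)
    set σ : R := ∏ m ∈ S.attach, s m with hσ
    have hσQ : σ ∉ Q := by
      refine Finset.prod_induction s (· ∉ Q) (fun x y hx hy hxy => ?_)
        ((Ideal.ne_top_iff_one Q).mp hQ.ne_top) (fun m _ => hsQ m)
      exact (hQ.mem_or_mem hxy).elim hx hy
    have hσann : σ ∈ (⊤ : Submodule R M).annihilator := by
      rw [Submodule.mem_annihilator]
      have hker : ∀ m : M, m ∈ LinearMap.ker (LinearMap.lsmul R M σ) := by
        intro m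
        have : m ∈ Submodule.span R (S : Set M) := hS ▸ Submodule.mem_top
        refine Submodule.span_le.mpr ?_ this
        intro x hx
        rw [SetLike.mem_coe, LinearMap.mem_ker, LinearMap.lsmul_apply, hσ,
          ← Finset.mul_prod_erase _ _ (Finset.mem_attach S ⟨x, hx⟩), mul_comm, mul_smul,
          hs ⟨x, hx⟩, smul_zero]
      exact fun m _ => hker m
    exact hσQ (hle hσann)
  obtain ⟨m₁, hm₁⟩ : ∃ m : M, m ∉ N := by
    by_contra h
    push_neg at h
    exact hN (Submodule.eq_top_iff'.mpr h)
  -- annihilators of elements outside N are contained in Q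
  have hannQ : ∀ m : M, m ∉ N → (Submodule.span R {m}).annihilator ≤ Q := by
    intro m hm a ha
    by_contra haQ
    exact hm ⟨a, haQ, (Submodule.mem_annihilator_span_singleton m a).mp ha⟩
  -- choose a maximal annihilator
  obtain ⟨I₀, ⟨m₀, hm₀, hI₀⟩, hmax⟩ :=
    set_has_maximal_iff_noetherian.mpr (inferInstance : IsNoetherian R R)
      {I : Ideal R | ∃ m : M, m ∉ N ∧ I = (Submodule.span R {m}).annihilator}
      ⟨_, m₁, hm₁, rfl⟩
  have hmax' : ∀ (m : M), m ∉ N → I₀ ≤ (Submodule.span R {m}).annihilator →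
      (Submodule.span R {m}).annihilator = I₀ := by
    intro m hm hle'
    by_contra hne
    exact hmax _ ⟨m, hm, rfl⟩ (lt_of_le_of_ne hle' (Ne.symm hne))
  have hm₀mem : ∀ a : R, a ∈ I₀ ↔ a • m₀ = 0 := by
    intro a; rw [hI₀]; exact Submodule.mem_annihilator_span_singleton m₀ a
  -- I₀ is prime
  have hprime : Ideal.IsPrime I₀ := by
    constructor
    · intro h
      apply hm₀
      have : (1 : R) • m₀ = 0 := (hm₀mem 1).mp (h ▸ Submodule.mem_top)
      rw [one_smul] at this
      rw [this]
      exact N.zero_mem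
    · intro a b hab
      rw [or_iff_not_imp_right]
      intro hb
      by_cases hbN : b • m₀ ∈ N
      · -- leads to a contradiction
        obtain ⟨s, hsQ, hsb⟩ := hbN
        exfalso
        have hm₁N : s • m₀ ∉ N := by
          rintro ⟨t, htQ, hts⟩
          exact hm₀ ⟨t * s, fun h => ((hQ.mem_or_mem h).elim htQ hsQ), by
            rw [mul_smul]; exact hts⟩
        have hle' : I₀ ≤ (Submodule.span R {s • m₀}).annihilator := by
          intro c hc
          rw [Submodule.mem_annihilator_span_singleton]
          rw [smul_comm, (hm₀mem c).mp hc, smul_zero]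
        have := hmax' _ hm₁N hle'
        apply hb
        rw [hm₀mem]
        have : b ∈ (Submodule.span R {s • m₀}).annihilator := by
          rw [Submodule.mem_annihilator_span_singleton, smul_comm]
          exact hsb
        rw [hmax' _ hm₁N hle'] at this
        exact (hm₀mem b).mp this
      · have hle' : I₀ ≤ (Submodule.span R {b • m₀}).annihilator := by
          intro c hc
          rw [Submodule.mem_annihilator_span_singleton]
          rw [smul_comm, (hm₀mem c).mp hc, smul_zero]
        have heq := hmax' _ hbN hle'
        have : a ∈ (Submodule.span R {b • m₀}).annihilator := by
          rw [Submodule.mem_annihilator_span_singleton, smul_smul]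
          exact (hm₀mem (a * b)).mp hab
        rw [heq] at this
        exact this
  exact ⟨I₀, ⟨hprime, m₀, hI₀⟩, hI₀ ▸ hannQ m₀ hm₀⟩

/-- Each maximal minor of `A` annihilates `M_A`. -/
lemma minor_mem_annihilator {d k n : ℕ} (A : Matrix (Fin k) (Fin n) (LaurentR d))
    (c : Fin k ↪ Fin n) :
    (A.submatrix id c).det ∈ (⊤ : Submodule (LaurentR d) (MA A)).annihilator := by
  classical
  rw [Submodule.mem_annihilator]
  intro m _
  obtain ⟨x, rfl⟩ := Submodule.Quotient.mk_surjective _ m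
  rw [← Submodule.Quotient.mk_smul, Submodule.Quotient.mk_eq_zero]
  set B := A.submatrix id c with hB
  have h1 : B.det • x = B.mulVec (B.adjugate.mulVec x) := by
    rw [Matrix.mulVec_mulVec, Matrix.mul_adjugate, Matrix.smul_mulVec,
      Matrix.one_mulVec]
  rw [h1, mulVec_eq_sum_cols]
  refine Submodule.sum_mem _ fun j _ => Submodule.smul_mem _ _ ?_
  refine Submodule.subset_span ⟨c j, ?_⟩
  rfl

theorem expansive_iff_subdeterminants_have_no_common_zero_on_torus (d k n : ℕ)
    (A : Matrix (Fin k) (Fin n) (LaurentR d))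
    -- `A` has rank `k` over the fraction field of `R`
    (hrank : (A.map (algebraMap (LaurentR d) (FractionRing (LaurentR d)))).rank = k) :
    (¬ ∃ z : Fin d → ℂ, (∀ i, ‖z i‖ = 1) ∧
        ∀ c : Fin k ↪ Fin n, ev z (A.submatrix id c).det = 0)
      ↔ ∀ P ∈ annAssociatedPrimes (LaurentR d) (MA A),
          ¬ ∃ z : Fin d → ℂ, (∀ i, ‖z i‖ = 1) ∧ ∀ f ∈ P, ev z f = 0 := by
  classical
  constructor
  · -- (i) → (ii)
    rintro hL P hP ⟨z, hzt, hzv⟩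
    exact hL ⟨z, hzt, fun c => hzv _ (by obtain ⟨_, x, rfl⟩ := hP; exact Submodule.annihilator_mono le_top (minor_mem_annihilator A c))⟩
  · -- (ii) → (i)
    rintro hR ⟨z, hzt, hzm⟩
    have hz : ∀ i, z i ≠ 0 := by
      intro i h
      have := hzt i
      rw [h] at this
      simp at this
    set φ := evHom z hz with hφ
    rcases Nat.eq_zero_or_pos k with hk | hk
    · -- `k = 0` : the empty minor is 1
      subst hk
      have hc : Fin 0 ↪ Fin n := ⟨fun i => i.elim0, fun i => i.elim0⟩
      have := hzm hc
      rw [Matrix.det_fin_zero, ev_eq_evHom z hz, map_one] at this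
      exact one_ne_zero this
    -- the kernel of evaluation
    have hQprime : (RingHom.ker φ).IsPrime := RingHom.ker_isPrime φ
    -- annihilator of M_A is contained in ker φ
    have hann : (⊤ : Submodule (LaurentR d) (MA A)).annihilator ≤ RingHom.ker φ := by
      intro a ha
      rw [Submodule.mem_annihilator] at ha
      -- a • I = A * C for some C
      have hcol : ∀ i : Fin k, a • (Pi.single i 1 : Fin k → LaurentR d) ∈ colSpan A := by
        intro i
        have := ha (Submodule.Quotient.mk (Pi.single i (1 : LaurentR d))) Submodule.mem_top
        rwa [← Submodule.Quotient.mk_smul, Submodule.Quotient.mk_eq_zero] at this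
      choose C hC using fun i => (Submodule.mem_span_range_iff_exists_fun (LaurentR d)).mp (hcol i)
      set Cm : Matrix (Fin n) (Fin k) (LaurentR d) := Matrix.of fun j i => C i j with hCm
      have hAC : A * Cm = a • (1 : Matrix (Fin k) (Fin k) (LaurentR d)) := by
        refine Matrix.ext fun i' i => ?_
        have h2 := congrFun (hC i) i'
        simp only [Finset.sum_apply, Pi.smul_apply, smul_eq_mul, Pi.single_apply] at h2
        rw [Matrix.mul_apply, Matrix.smul_apply, Matrix.one_apply, smul_eq_mul, ← h2]
        refine Finset.sum_congr rfl fun j _ => ?_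
        rw [hCm, Matrix.of_apply, mul_comm]
      -- push to ℂ
      have hACℂ : (A.map φ) * (Cm.map φ) = (φ a) • (1 : Matrix (Fin k) (Fin k) ℂ) := by
        have hmapped := congrArg (fun M => M.map (φ : LaurentR d →+* ℂ)) hAC
        rw [Matrix.map_mul] at hmapped
        rw [hmapped]
        ext i j
        simp [Matrix.map_apply, Matrix.smul_apply, Matrix.one_apply, apply_ite φ,
          map_one, map_zero, mul_ite, mul_one, mul_zero, smul_eq_mul]
      rw [RingHom.mem_ker]
      by_contra hane
      -- columns of Z span ℂ^k
      set Z := A.map φ with hZ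
      set cols : Fin n → (Fin k → ℂ) := fun j i => Z i j with hcols
      have hspan : Submodule.span ℂ (Set.range cols) = ⊤ := by
        rw [eq_top_iff]
        intro x _
        have h1 : Z.mulVec ((φ a)⁻¹ • (Cm.map φ).mulVec x) = x := by
          rw [Matrix.mulVec_smul, Matrix.mulVec_mulVec, hACℂ, Matrix.smul_mulVec,
            Matrix.one_mulVec, smul_smul, inv_mul_cancel₀ hane, one_smul]
        rw [← h1, mulVec_eq_sum_cols]
        exact Submodule.sum_mem _ fun j _ =>
          Submodule.smul_mem _ _ (Submodule.subset_span ⟨j, rfl⟩)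
      obtain ⟨b, hb, hbspan, hli⟩ := exists_linearIndependent ℂ (Set.range cols)
      rw [hspan] at hbspan
      have hBb : Module.Basis b ℂ (Fin k → ℂ) :=
        Module.Basis.mk hli (by rw [Subtype.range_coe]; exact hbspan.ge)
      haveI : Fintype b := FiniteDimensional.fintypeBasisIndex hBb
      have hcard : Fintype.card b = k := by
        have := Module.finrank_eq_card_basis hBb
        rw [Module.finrank_fin_fun] at this
        omega
      set e : Fin k ≃ b := (Fintype.equivFinOfCardEq hcard).symm with he
      have hchoice : ∀ i : Fin k, ∃ j : Fin n, cols j = (e i : Fin k → ℂ) := fun i => hb (e i).2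
      choose c0 hc0 using hchoice
      have hinj : Function.Injective c0 := by
        intro i i' h
        have : cols (c0 i) = cols (c0 i') := by rw [h]
        rw [hc0, hc0] at this
        exact e.injective (Subtype.ext this)
      set W := Z.submatrix id c0 with hW
      have hWcols : ∀ i : Fin k, (fun i' => W i' i) = (e i : Fin k → ℂ) := by
        intro i
        funext i'
        rw [hW]
        exact congrFun (hc0 i) i'
      have hWsurj : Function.Surjective W.mulVec := by
        intro x
        have hx : x ∈ Submodule.span ℂ (Set.range fun i : Fin k => (e i : Fin k → ℂ)) := by
          have hr : (Set.range fun i : Fin k => (e i : Fin k → ℂ)) = b := by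
            ext x
            constructor
            · rintro ⟨i, rfl⟩; exact (e i).2
            · intro hx; exact ⟨e.symm ⟨x, hx⟩, by simp⟩
          rw [hr, hbspan]
          exact Submodule.mem_top
        obtain ⟨v, hv⟩ := (Submodule.mem_span_range_iff_exists_fun ℂ).mp hx
        refine ⟨v, ?_⟩
        rw [mulVec_eq_sum_cols]
        rw [← hv]
        refine Finset.sum_congr rfl fun i _ => ?_
        rw [hWcols]
      have hWunit : IsUnit W.det := (Matrix.isUnit_iff_isUnit_det W).mp
        (Matrix.mulVec_surjective_iff_isUnit.mp hWsurj)
      have hzero := hzm ⟨c0, hinj⟩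
      rw [ev_eq_evHom z hz, RingHom.map_det] at hzero
      simp only [RingHom.mapMatrix_apply, Function.Embedding.coeFn_mk, ← hφ] at hzero
      have hsub : (A.submatrix id c0).map φ = W := by
        rw [hW, hZ, Matrix.submatrix_map]
      rw [hsub] at hzero
      exact hWunit.ne_zero hzero
    obtain ⟨P, hPass, hPQ⟩ := exists_isAssociatedPrime_le hQprime hann
    exact hR P hPass ⟨z, hzt, fun f hf => by
      rw [ev_eq_evHom z hz]
      exact RingHom.mem_ker.mp (hPQ hf)⟩
end
end

section
/- Let A be a k×k matrix over R and n ≥ 1. The quotient ring S_n = R/⟨u₁^n − 1,…,u_d^n − 1⟩ is a free ℤ-module of rank n^d, and multiplication by A defines a ℤ-linear endomorphism of S_n^k ≅ ℤ^{k·n^d}. The determinant of this ℤ-linear endomorphism equals ∏_ω det(ev_ω A), the product taken over all d-tuples ω ∈ (μ_n)^d of n-th roots of unity, where ev_ω A denotes the complex k×k matrix obtained by evaluating each entry of A at ω. -/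
noncomputable section

/-- The monomial `uᵢ`. -/
def uvar {d : ℕ} (i : Fin d) : LaurentR d :=
  AddMonoidAlgebra.single (Pi.single i (1 : ℤ)) (1 : ℤ)

/-- The ideal `⟨u₁ⁿ − 1, …, u_dⁿ − 1⟩ ⊆ R`. -/
def In (d n : ℕ) : Ideal (LaurentR d) :=
  Ideal.span (Set.range fun i : Fin d => uvar i ^ n - 1)

/-- The quotient ring `S_n = R/⟨u₁ⁿ − 1, …, u_dⁿ − 1⟩`. -/
abbrev Sn (d n : ℕ) : Type := LaurentR d ⧸ In d n

/-- Multiplication by the matrix `A` on `S_nᵏ`, viewed as a `ℤ`-linear endomorphism. -/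
def mulByA (d n k : ℕ) (A : Matrix (Fin k) (Fin k) (LaurentR d)) :
    (Fin k → Sn d n) →ₗ[ℤ] (Fin k → Sn d n) :=
  ((A.map (Ideal.Quotient.mk (In d n))).mulVecLin).toAddMonoidHom.toIntLinearMap

namespace DetAux

open AddMonoidAlgebra Complex

variable {d n : ℕ}

/-- The monoid hom `Multiplicative ℤ^d →* ℂ`, `g ↦ ∏ zᵢ^{gᵢ}`. -/
def evMH (z : Fin d → ℂ) (hz : ∀ i, z i ≠ 0) : Multiplicative (Fin d → ℤ) →* ℂ where
  toFun g := ∏ i, z i ^ (Multiplicative.toAdd g i)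
  map_one' := by simp
  map_mul' a b := by
    show (∏ i, z i ^ (Multiplicative.toAdd (a * b)) i)
        = (∏ i, z i ^ (Multiplicative.toAdd a) i) * ∏ i, z i ^ (Multiplicative.toAdd b) i
    rw [← Finset.prod_mul_distrib]
    exact Finset.prod_congr rfl fun i _ => by
      rw [toAdd_mul, Pi.add_apply, zpow_add₀ (hz i)]

/-- `ev z` as a ring hom (when all `z i ≠ 0`). -/
def evRH (z : Fin d → ℂ) (hz : ∀ i, z i ≠ 0) : LaurentR d →+* ℂ :=
  ((AddMonoidAlgebra.lift ℤ ℂ (Fin d → ℤ)) (evMH z hz)).toRingHom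

lemma evRH_apply (z : Fin d → ℂ) (hz : ∀ i, z i ≠ 0) (f : LaurentR d) :
    evRH z hz f = ev z f := by
  show ((AddMonoidAlgebra.lift ℤ ℂ (Fin d → ℤ)) (evMH z hz)) f = ev z f
  rw [AddMonoidAlgebra.lift_apply]
  refine Finsupp.sum_congr fun m _ => ?_
  rw [zsmul_eq_mul]
  rfl

lemma evRH_single (z : Fin d → ℂ) (hz : ∀ i, z i ≠ 0) (a : Fin d → ℤ) (c : ℤ) :
    evRH z hz (AddMonoidAlgebra.single a c) = (c : ℂ) * ∏ i, z i ^ (a i) := by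
  show ((AddMonoidAlgebra.lift ℤ ℂ (Fin d → ℤ)) (evMH z hz)) _ = _
  rw [AddMonoidAlgebra.lift_single, zsmul_eq_mul]
  rfl

lemma evRH_uvar (z : Fin d → ℂ) (hz : ∀ i, z i ≠ 0) (i : Fin d) :
    evRH z hz (uvar i) = z i := by
  rw [uvar, evRH_single, Int.cast_one, one_mul]
  refine (Finset.prod_eq_single i (fun j _ hj => by
    rw [Pi.single_eq_of_ne hj, zpow_zero]) (by simp)).trans ?_
  rw [Pi.single_eq_same, zpow_one]

end DetAux

namespace DetAux

open AddMonoidAlgebra Complex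

variable {d n : ℕ}

/-- The evaluation point: `d`-tuple of `n`-th roots of unity indexed by `ω`. -/
def zpt (n : ℕ) (ω : Fin d → Fin n) : Fin d → ℂ :=
  fun i => Complex.exp (2 * Real.pi * Complex.I * ((ω i : ℕ) : ℂ) / (n : ℂ))

lemma zpt_eq (ω : Fin d → Fin n) (i : Fin d) :
    zpt n ω i = Complex.exp (2 * Real.pi * Complex.I / (n : ℂ)) ^ ((ω i : ℕ)) := by
  rw [zpt, ← Complex.exp_nat_mul]
  congr 1
  ring

lemma zpt_ne_zero (ω : Fin d → Fin n) (i : Fin d) : zpt n ω i ≠ 0 :=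
  Complex.exp_ne_zero _

lemma zpt_pow_n [NeZero n] (ω : Fin d → Fin n) (i : Fin d) : zpt n ω i ^ n = 1 := by
  rw [zpt_eq, pow_right_comm,
    (Complex.isPrimitiveRoot_exp n (NeZero.ne n)).pow_eq_one, one_pow]

lemma gen_mem (i : Fin d) : uvar (d := d) i ^ n - 1 ∈ In d n :=
  Ideal.subset_span ⟨i, rfl⟩

/-- Evaluation at roots of unity descends to the quotient `Sn`. -/
def evQ (n : ℕ) [NeZero n] (ω : Fin d → Fin n) : Sn d n →+* ℂ :=
  Ideal.Quotient.lift (In d n) (evRH (zpt n ω) (zpt_ne_zero ω)) (by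
    intro a ha
    rw [← RingHom.mem_ker]
    refine Ideal.span_le.2 ?_ ha
    rintro _ ⟨i, rfl⟩
    rw [SetLike.mem_coe, RingHom.mem_ker, map_sub, map_pow, map_one, evRH_uvar,
      zpt_pow_n, sub_self])

lemma evQ_mk [NeZero n] (ω : Fin d → Fin n) (f : LaurentR d) :
    evQ n ω (Ideal.Quotient.mk (In d n) f) = evRH (zpt n ω) (zpt_ne_zero ω) f :=
  rfl

end DetAux

namespace DetAux

open AddMonoidAlgebra Complex

variable {d n : ℕ}

/-- Componentwise reduction `ℤ^d →+ (ℤ/n)^d`. -/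
def redHom (d n : ℕ) : (Fin d → ℤ) →+ (Fin d → ZMod n) where
  toFun g i := (g i : ZMod n)
  map_zero' := funext fun i => Int.cast_zero
  map_add' a b := funext fun i => Int.cast_add _ _

/-- The induced ring hom `R → ℤ[(ℤ/n)^d]`. -/
def piRH (d n : ℕ) : LaurentR d →+* AddMonoidAlgebra ℤ (Fin d → ZMod n) :=
  AddMonoidAlgebra.mapDomainRingHom ℤ (redHom d n)

lemma piRH_single (a : Fin d → ℤ) (c : ℤ) :
    piRH d n (AddMonoidAlgebra.single a c)
      = AddMonoidAlgebra.single (redHom d n a) c := by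
  show AddMonoidAlgebra.mapDomain (redHom d n) (AddMonoidAlgebra.single a c) = _
  rw [AddMonoidAlgebra.mapDomain_single]

@[simp] lemma redHom_apply (g : Fin d → ℤ) (i : Fin d) :
    redHom d n g i = ((g i : ℤ) : ZMod n) := rfl

lemma piRH_gen (i : Fin d) : piRH d n (uvar i ^ n - 1) = 0 := by
  rw [map_sub, map_one, map_pow, uvar, piRH_single, AddMonoidAlgebra.single_pow, one_pow]
  have h : n • redHom d n (Pi.single i (1 : ℤ)) = 0 := by
    rw [← map_nsmul]
    funext j
    rw [redHom_apply, Pi.zero_apply]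
    rcases eq_or_ne j i with rfl | hj
    · rw [Pi.smul_apply, Pi.single_eq_same]
      simp [ZMod.natCast_self]
    · rw [Pi.smul_apply, Pi.single_eq_of_ne hj, smul_zero, Int.cast_zero]
  rw [h, ← AddMonoidAlgebra.one_def, sub_self]

/-- `piRH` descends to the quotient. -/
def piQ (d n : ℕ) : Sn d n →+* AddMonoidAlgebra ℤ (Fin d → ZMod n) :=
  Ideal.Quotient.lift (In d n) (piRH d n) (by
    intro a ha
    rw [← RingHom.mem_ker]
    refine Ideal.span_le.2 ?_ ha
    rintro _ ⟨i, rfl⟩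
    rw [SetLike.mem_coe, RingHom.mem_ker, piRH_gen])

/-- embedding of reduced exponents -/
def emb (m : Fin d → Fin n) : Fin d → ℤ := fun i => ((m i : ℕ) : ℤ)

/-- The monomial basis family of `Sn`. -/
def bfam (d n : ℕ) (m : Fin d → Fin n) : Sn d n :=
  Ideal.Quotient.mk (In d n) (AddMonoidAlgebra.single (emb m) 1)

lemma red_emb_inj [NeZero n] :
    Function.Injective fun m : Fin d → Fin n => redHom d n (emb m) := by
  intro m m' h
  funext i
  have h1 : ((emb m i : ℤ) : ZMod n) = ((emb m' i : ℤ) : ZMod n) := congrFun h i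
  rw [emb, emb, Int.cast_natCast, Int.cast_natCast] at h1
  have h2 := congrArg ZMod.val h1
  rw [ZMod.val_cast_of_lt (m i).isLt, ZMod.val_cast_of_lt (m' i).isLt] at h2
  exact Fin.ext h2

lemma bfam_indep (d n : ℕ) [NeZero n] : LinearIndependent ℤ (bfam d n) := by
  have hb : LinearIndependent ℤ
      (fun g : Fin d → ZMod n =>
        (AddMonoidAlgebra.single g 1 : AddMonoidAlgebra ℤ (Fin d → ZMod n))) :=
    ((Finsupp.basisSingleOne (R := ℤ) (ι := Fin d → ZMod n)).map
      (AddMonoidAlgebra.coeffLinearEquiv ℤ).symm).linearIndependent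
  have hcomp := hb.comp _ (red_emb_inj (d := d) (n := n))
  refine LinearIndependent.of_comp ((piQ d n).toAddMonoidHom.toIntLinearMap) ?_
  have heq : ⇑(piQ d n).toAddMonoidHom.toIntLinearMap ∘ bfam d n
      = (fun g : Fin d → ZMod n =>
          (AddMonoidAlgebra.single g 1 : AddMonoidAlgebra ℤ (Fin d → ZMod n)))
        ∘ (fun m => redHom d n (emb m)) := by
    funext m
    show piQ d n (bfam d n m) = _
    rw [bfam, piQ, Ideal.Quotient.lift_mk, piRH_single]
    rfl
  rw [heq]
  exact hcomp

end DetAux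

namespace DetAux

open AddMonoidAlgebra Complex

variable {d n : ℕ}

/-- Monomials as a monoid hom into `Sn`. -/
def Phi (d n : ℕ) : Multiplicative (Fin d → ℤ) →* Sn d n :=
  ((Ideal.Quotient.mk (In d n)) : LaurentR d →+* Sn d n).toMonoidHom.comp
    (AddMonoidAlgebra.of ℤ (Fin d → ℤ))

/-- Monomials are units in `Sn`. -/
def PhiU (d n : ℕ) : Multiplicative (Fin d → ℤ) →* (Sn d n)ˣ :=
  (Phi d n).toHomUnits

lemma coe_PhiU (g : Fin d → ℤ) :
    (PhiU d n (Multiplicative.ofAdd g) : Sn d n)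
      = Ideal.Quotient.mk (In d n) (AddMonoidAlgebra.single g 1) := rfl

lemma PhiU_pow_n (i : Fin d) :
    PhiU d n (Multiplicative.ofAdd (Pi.single i 1)) ^ n = 1 := by
  refine Units.ext ?_
  rw [Units.val_pow_eq_pow_val, Units.val_one, coe_PhiU, ← map_pow]
  rw [show (1 : Sn d n) = Ideal.Quotient.mk (In d n) 1 from rfl, Ideal.Quotient.eq]
  exact gen_mem i

lemma PhiU_decomp (g : Fin d → ℤ) :
    PhiU d n (Multiplicative.ofAdd g)
      = ∏ i, PhiU d n (Multiplicative.ofAdd (Pi.single i 1)) ^ (g i) := by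
  have hg : g = ∑ i, (g i) • Pi.single i (1 : ℤ) := by
    conv_lhs => rw [← Finset.univ_sum_single g]
    exact Finset.sum_congr rfl fun i _ => by rw [← Pi.single_smul, smul_eq_mul, mul_one]
  conv_lhs => rw [hg, ofAdd_sum]
  rw [map_prod]
  exact Finset.prod_congr rfl fun i _ => by rw [ofAdd_zsmul, map_zpow]

/-- Index reduction: exponents mod `n`. -/
def reduceIdx (n : ℕ) [NeZero n] (g : Fin d → ℤ) : Fin d → Fin n :=
  fun i => ⟨((g i : ZMod n)).val, ZMod.val_lt _⟩

lemma mk_single_eq [NeZero n] (g : Fin d → ℤ) :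
    Ideal.Quotient.mk (In d n) (AddMonoidAlgebra.single g 1)
      = bfam d n (reduceIdx n g) := by
  rw [bfam, ← coe_PhiU, ← coe_PhiU]
  congr 1
  rw [PhiU_decomp, PhiU_decomp]
  refine Finset.prod_congr rfl fun i _ => ?_
  have hcast : (((emb (reduceIdx n g) i : ℤ)) : ZMod n) = ((g i : ℤ) : ZMod n) := by
    show ((((g i : ZMod n)).val : ℤ) : ZMod n) = _
    push_cast [ZMod.natCast_val, ZMod.cast_id]
    rfl
  have hdvd : (n : ℤ) ∣ g i - emb (reduceIdx n g) i := by
    rw [← ZMod.intCast_zmod_eq_zero_iff_dvd, Int.cast_sub, hcast, sub_self]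
  obtain ⟨q, hq⟩ := hdvd
  have hgi : g i = emb (reduceIdx n g) i + (n : ℤ) * q := by linarith
  rw [hgi, zpow_add, zpow_mul, zpow_natCast, PhiU_pow_n, one_zpow, mul_one]

lemma bfam_span (d n : ℕ) [NeZero n] :
    ⊤ ≤ Submodule.span ℤ (Set.range (bfam d n)) := by
  intro x _
  obtain ⟨f, rfl⟩ := Ideal.Quotient.mk_surjective x
  have hf : f = Finsupp.sum f.coeff AddMonoidAlgebra.single := (AddMonoidAlgebra.sum_coeff_single f).symm
  rw [hf, Finsupp.sum, map_sum]
  refine Submodule.sum_mem _ fun g _ => ?_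
  have h1 : (f.coeff g) • AddMonoidAlgebra.single g (1 : ℤ) = AddMonoidAlgebra.single g (f.coeff g) := by
    rw [AddMonoidAlgebra.smul_single', mul_one]
  rw [← h1, map_zsmul]
  refine Submodule.smul_mem _ _ ?_
  rw [mk_single_eq]
  exact Submodule.subset_span ⟨_, rfl⟩

/-- The monomial basis of `Sn` over `ℤ`. -/
def bSn (d n : ℕ) [NeZero n] : Module.Basis (Fin d → Fin n) ℤ (Sn d n) :=
  Module.Basis.mk (bfam_indep d n) (bfam_span d n)

lemma bSn_apply (d n : ℕ) [NeZero n] (m : Fin d → Fin n) :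
    bSn d n m = bfam d n m := Module.Basis.mk_apply _ _ _

end DetAux

namespace DetAux

/-- If a `ℤ`-linear endomorphism `f` and a `ℂ`-linear endomorphism `g` are intertwined
by a map sending a `ℤ`-basis to a `ℂ`-basis, their determinants agree. -/
lemma det_int_eq_det_complex {V W : Type*} [AddCommGroup V] [Module ℤ V]
    [AddCommGroup W] [Module ℂ W] {ι : Type*} [Fintype ι] [DecidableEq ι]
    (f : V →ₗ[ℤ] V) (g : W →ₗ[ℂ] W) (T : V →ₗ[ℤ] W)
    (b : Module.Basis ι ℤ V) (c : Module.Basis ι ℂ W)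
    (hbc : ∀ j, T (b j) = c j)
    (hcomm : ∀ v, T (f v) = g (T v)) :
    ((LinearMap.det f : ℤ) : ℂ) = LinearMap.det g := by
  classical
  have hgc : ∀ j, g (c j) = ∑ i, ((b.repr (f (b j)) i : ℤ) : ℂ) • c i := by
    intro j
    rw [← hbc, ← hcomm]
    conv_lhs => rw [← b.sum_repr (f (b j))]
    rw [map_sum]
    refine Finset.sum_congr rfl fun i _ => ?_
    rw [LinearMap.map_smul, hbc]
    exact (Int.cast_smul_eq_zsmul ℂ _ _).symm
  have hMg : LinearMap.toMatrix c c g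
      = (LinearMap.toMatrix b b f).map (fun r : ℤ => (r : ℂ)) := by
    ext i j
    rw [LinearMap.toMatrix_apply, Matrix.map_apply, LinearMap.toMatrix_apply, hgc]
    exact congrFun (c.repr_sum_self fun i => ((b.repr (f (b j)) i : ℤ) : ℂ)) i
  have hdet : LinearMap.det g = (((LinearMap.toMatrix b b f).det : ℤ) : ℂ) := by
    rw [← LinearMap.det_toMatrix c g, hMg,
      show (LinearMap.toMatrix b b f).map (fun r : ℤ => (r : ℂ))
        = (Int.castRingHom ℂ).mapMatrix (LinearMap.toMatrix b b f) from rfl,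
      ← RingHom.map_det]
    rfl
  rw [hdet, LinearMap.det_toMatrix]

end DetAux

namespace DetAux

open AddMonoidAlgebra Complex

variable {d n : ℕ}

lemma evQ_bfam [NeZero n] (ω m : Fin d → Fin n) :
    evQ n ω (bfam d n m) = ∏ i, zpt n ω i ^ ((m i : ℕ)) := by
  rw [bfam, evQ_mk, evRH_single, Int.cast_one, one_mul]
  exact Finset.prod_congr rfl fun i _ => by rw [emb, zpow_natCast]

/-- Orthogonality of characters / inverse DFT computation. -/
lemma dft_span [NeZero n] (ω₀ ω : Fin d → Fin n) :
    (∑ m : Fin d → Fin n,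
      (((n : ℂ) ^ d)⁻¹ * ∏ i, (zpt n ω₀ i ^ ((m i : ℕ)))⁻¹) * ∏ i, zpt n ω i ^ ((m i : ℕ)))
      = if ω = ω₀ then 1 else 0 := by
  have hnne : (n : ℂ) ≠ 0 := Nat.cast_ne_zero.2 (NeZero.ne n)
  have hterm : ∀ m : Fin d → Fin n,
      (((n : ℂ) ^ d)⁻¹ * ∏ i, (zpt n ω₀ i ^ ((m i : ℕ)))⁻¹) * ∏ i, zpt n ω i ^ ((m i : ℕ))
        = ((n : ℂ) ^ d)⁻¹ * ∏ i, (zpt n ω i / zpt n ω₀ i) ^ ((m i : ℕ)) := by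
    intro m
    rw [mul_assoc, ← Finset.prod_mul_distrib]
    congr 1
    exact Finset.prod_congr rfl fun i _ => by
      rw [div_pow, div_eq_mul_inv, mul_comm]
  rw [Finset.sum_congr rfl fun m _ => hterm m, ← Finset.mul_sum]
  have hswap : (∑ m : Fin d → Fin n, ∏ i, (zpt n ω i / zpt n ω₀ i) ^ ((m i : ℕ)))
      = ∏ i, ∑ j : Fin n, (zpt n ω i / zpt n ω₀ i) ^ ((j : ℕ)) := by
    rw [Finset.prod_univ_sum, Fintype.piFinset_univ]
  rw [hswap]
  by_cases hω : ω = ω₀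
  · subst hω
    rw [if_pos rfl]
    have h1 : ∀ i : Fin d, (∑ j : Fin n, (zpt n ω i / zpt n ω i) ^ ((j : ℕ))) = (n : ℂ) := by
      intro i
      rw [div_self (zpt_ne_zero ω i)]
      simp
    rw [Finset.prod_congr rfl fun i _ => h1 i, Finset.prod_const, Finset.card_univ,
      Fintype.card_fin, inv_mul_cancel₀ (pow_ne_zero d hnne)]
  · obtain ⟨i₀, hi₀⟩ : ∃ i, ω i ≠ ω₀ i := by
      by_contra h
      push_neg at h
      exact hω (funext h)
    rw [if_neg hω]
    have hzero : (∑ j : Fin n, (zpt n ω i₀ / zpt n ω₀ i₀) ^ ((j : ℕ))) = 0 := by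
      set x := zpt n ω i₀ / zpt n ω₀ i₀ with hx
      have hx1 : x ≠ 1 := by
        intro h
        apply hi₀
        have heq : zpt n ω i₀ = zpt n ω₀ i₀ :=
          (div_eq_one_iff_eq (zpt_ne_zero ω₀ i₀)).1 h
        rw [zpt_eq, zpt_eq] at heq
        exact Fin.ext ((Complex.isPrimitiveRoot_exp n (NeZero.ne n)).pow_inj
          (ω i₀).isLt (ω₀ i₀).isLt heq)
      have hxn : x ^ n = 1 := by
        rw [hx, div_pow, zpt_pow_n, zpt_pow_n]
        simp
      rw [Fin.sum_univ_eq_sum_range (fun j => x ^ j) n, geom_sum_eq hx1, hxn, sub_self,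
        zero_div]
    rw [Finset.prod_eq_zero (Finset.mem_univ i₀) hzero, mul_zero]

end DetAux

namespace DetAux

open AddMonoidAlgebra Complex

variable {d n k : ℕ}

/-- The evaluation map `Snᵏ → ℂ^{k × n^d}`. -/
def Tmap (d n k : ℕ) [NeZero n] :
    (Fin k → Sn d n) →ₗ[ℤ] ((Fin k × (Fin d → Fin n)) → ℂ) where
  toFun v p := evQ n p.2 (v p.1)
  map_add' v w := by
    funext p
    exact map_add (evQ n p.2) _ _
  map_smul' r v := by
    funext p
    show evQ n p.2 (r • v p.1) = r • evQ n p.2 (v p.1)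
    exact map_zsmul (evQ n p.2) r (v p.1)

@[simp] lemma Tmap_apply [NeZero n] (v : Fin k → Sn d n) (p : Fin k × (Fin d → Fin n)) :
    Tmap d n k v p = evQ n p.2 (v p.1) := rfl

/-- The `ℤ`-basis of `Snᵏ`. -/
def bV (d n k : ℕ) [NeZero n] : Module.Basis (Fin k × (Fin d → Fin n)) ℤ (Fin k → Sn d n) :=
  (Pi.basis fun _ : Fin k => bSn d n).reindex (Equiv.sigmaEquivProd (Fin k) (Fin d → Fin n))

lemma bV_apply [NeZero n] (a : Fin k) (m : Fin d → Fin n) :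
    bV d n k (a, m) = Pi.single a (bSn d n m) := by
  rw [bV, Module.Basis.reindex_apply,
    show (Equiv.sigmaEquivProd (Fin k) (Fin d → Fin n)).symm (a, m) = ⟨a, m⟩ from rfl,
    Pi.basis_apply]

lemma Tmap_bV [NeZero n] (a : Fin k) (m : Fin d → Fin n) :
    Tmap d n k (bV d n k (a, m)) = fun p : Fin k × (Fin d → Fin n) =>
      if p.1 = a then ∏ i, zpt n p.2 i ^ ((m i : ℕ)) else 0 := by
  funext p
  rw [bV_apply, Tmap_apply, Pi.single_apply]
  by_cases h : p.1 = a
  · rw [if_pos h, if_pos h, bSn_apply, evQ_bfam]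
  · rw [if_neg h, if_neg h, map_zero]

lemma cfam_span (d n k : ℕ) [NeZero n] :
    ⊤ ≤ Submodule.span ℂ
      (Set.range fun p : Fin k × (Fin d → Fin n) => Tmap d n k (bV d n k p)) := by
  rw [← (Pi.basisFun ℂ (Fin k × (Fin d → Fin n))).span_eq]
  refine Submodule.span_le.2 ?_
  rintro _ ⟨⟨a, ω₀⟩, rfl⟩
  have hsingle : (Pi.basisFun ℂ (Fin k × (Fin d → Fin n))) (a, ω₀)
      = ∑ m : Fin d → Fin n,
          (((n : ℂ) ^ d)⁻¹ * ∏ i, (zpt n ω₀ i ^ ((m i : ℕ)))⁻¹) •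
            Tmap d n k (bV d n k (a, m)) := by
    rw [Pi.basisFun_apply]
    funext p
    obtain ⟨a', ω⟩ := p
    rw [Finset.sum_apply]
    have hterm : ∀ m : Fin d → Fin n,
        ((((n : ℂ) ^ d)⁻¹ * ∏ i, (zpt n ω₀ i ^ ((m i : ℕ)))⁻¹) •
          Tmap d n k (bV d n k (a, m))) (a', ω)
        = (((n : ℂ) ^ d)⁻¹ * ∏ i, (zpt n ω₀ i ^ ((m i : ℕ)))⁻¹) *
            (if a' = a then ∏ i, zpt n ω i ^ ((m i : ℕ)) else 0) := by
      intro m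
      rw [Pi.smul_apply, Tmap_bV]
      rw [smul_eq_mul]
    rw [Finset.sum_congr rfl fun m _ => hterm m, Pi.single_apply]
    by_cases ha : a' = a
    · simp only [if_pos ha, Finset.sum_congr rfl fun m _ => rfl]
      rw [Finset.sum_congr rfl fun m (_ : m ∈ Finset.univ) => rfl, dft_span ω₀ ω]
      have hpair : ((a', ω) = (a, ω₀)) ↔ (ω = ω₀) := by
        subst ha
        constructor
        · intro h
          exact (Prod.ext_iff.1 h).2
        · intro h
          rw [h]
      by_cases hw : ω = ω₀
      · rw [if_pos hw, if_pos (hpair.2 hw)]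
      · rw [if_neg hw, if_neg (fun h => hw (hpair.1 h))]
    · simp only [if_neg ha, mul_zero, Finset.sum_const_zero]
      rw [if_neg (fun h => ha (Prod.ext_iff.1 h).1)]
  rw [hsingle]
  exact Submodule.sum_mem _ fun m _ =>
    Submodule.smul_mem _ _ (Submodule.subset_span ⟨(a, m), rfl⟩)

/-- The `ℂ`-basis of `ℂ^{k × n^d}` given by the images of the monomial basis. -/
def cB (d n k : ℕ) [NeZero n] : Module.Basis (Fin k × (Fin d → Fin n)) ℂ
    ((Fin k × (Fin d → Fin n)) → ℂ) :=
  basisOfTopLeSpanOfCardEqFinrank (fun p => Tmap d n k (bV d n k p)) (cfam_span d n k)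
    (by
      rw [Module.finrank_fintype_fun_eq_card]
      )

lemma cB_apply [NeZero n] (p : Fin k × (Fin d → Fin n)) :
    cB d n k p = Tmap d n k (bV d n k p) := by
  rw [cB, coe_basisOfTopLeSpanOfCardEqFinrank]

end DetAux

open DetAux

theorem det_of_matrix_action_on_Sn (d n k : ℕ) (hn : 1 ≤ n)
    (A : Matrix (Fin k) (Fin k) (LaurentR d)) :
    -- `S_n` is a free `ℤ`-module of rank `n^d`
    Module.Free ℤ (Sn d n) ∧ Module.finrank ℤ (Sn d n) = n ^ d ∧
    -- and the determinant of the `ℤ`-linear endomorphism `A` of `S_nᵏ ≅ ℤ^{k·n^d}`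
    -- is the product of the determinants of the evaluations of `A`
    -- at all `d`-tuples of `n`-th roots of unity
    ((LinearMap.det (mulByA d n k A) : ℤ) : ℂ)
      = ∏ j : Fin d → Fin n,
          (A.map (ev (fun i =>
            Complex.exp (2 * Real.pi * Complex.I * ((j i : ℕ) : ℂ) / (n : ℂ))))).det := by
  haveI : NeZero n := ⟨by omega⟩
  classical
  refine ⟨Module.Free.of_basis (bSn d n), ?_, ?_⟩
  · rw [Module.finrank_eq_card_basis (bSn d n)]
    simp [Fintype.card_fun]
  · set Dmat : Matrix (Fin k × (Fin d → Fin n)) (Fin k × (Fin d → Fin n)) ℂ :=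
      Matrix.blockDiagonal (fun ω : Fin d → Fin n =>
        A.map (fun r => evRH (zpt n ω) (zpt_ne_zero ω) r)) with hD
    have hcomm : ∀ v, Tmap d n k (mulByA d n k A v)
        = Matrix.toLin' Dmat (Tmap d n k v) := by
      intro v
      funext p
      obtain ⟨a, ω⟩ := p
      have hL : Tmap d n k (mulByA d n k A v) (a, ω)
          = ∑ b, evRH (zpt n ω) (zpt_ne_zero ω) (A a b) * evQ n ω (v b) := by
        rw [Tmap_apply]
        show evQ n ω ((A.map (Ideal.Quotient.mk (In d n))).mulVec v a) = _
        have hmv : (A.map (Ideal.Quotient.mk (In d n))).mulVec v a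
            = ∑ b, (Ideal.Quotient.mk (In d n)) (A a b) * v b := by
          simp [Matrix.mulVec, dotProduct, Matrix.map_apply]
        rw [hmv, map_sum]
        exact Finset.sum_congr rfl fun b _ => by rw [map_mul, evQ_mk]
      have hR : Matrix.toLin' Dmat (Tmap d n k v) (a, ω)
          = ∑ b, evRH (zpt n ω) (zpt_ne_zero ω) (A a b) * evQ n ω (v b) := by
        rw [Matrix.toLin'_apply]
        show ∑ p : Fin k × (Fin d → Fin n), Dmat (a, ω) p * Tmap d n k v p = _
        rw [Fintype.sum_prod_type]
        refine Finset.sum_congr rfl fun b _ => ?_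
        simp only [show ∀ ω' : Fin d → Fin n, Dmat (a, ω) (b, ω')
            = if ω = ω' then evRH (zpt n ω') (zpt_ne_zero ω') (A a b) else 0 from
          fun ω' => by rw [hD, Matrix.blockDiagonal_apply]; split <;> simp_all,
          ite_mul, zero_mul, Tmap_apply]
        rw [Finset.sum_ite_eq]
        rw [if_pos (Finset.mem_univ ω)]
      rw [hL, hR]
    have hdet := det_int_eq_det_complex (mulByA d n k A) (Matrix.toLin' Dmat)
      (Tmap d n k) (bV d n k) (cB d n k)
      (fun p => (cB_apply p).symm) hcomm
    rw [hdet, LinearMap.det_toLin', hD, Matrix.det_blockDiagonal]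
    refine Finset.prod_congr rfl fun ω _ => ?_
    rw [show (fun r => evRH (zpt n ω) (zpt_ne_zero ω) r) = ev (zpt n ω) from
      funext fun r => evRH_apply _ _ r]
    rfl
end
end
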